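/- Fix p, q ∈ [0,1] with p + q ≤ 1, r = 1 - p - q, p > 0, and let μ be a translation-invariant probability measure on {0,?,1}^ℤ that is stationary for the envelope PCA F̂_{p,q}. If μ(000?) = 0, then μ(⟨***⟩) = 0 and hence μ(?) = 0. (Here μ(000?) is the probability that four consecutive coordinates read (0,0,0,?) and μ(⟨***⟩) is the probability that three consecutive coordinates lie in {0,?}³ \ {(0,0,0)}.) -/

import Mathlib

open MeasureTheory

inductive PSym : Type
  | zero : PSym
  | quest : PSym
  | one : PSym
deriving DecidableEq

instance : Fintype PSym :=
  ⟨{PSym.zero, PSym.quest, PSym.one}, fun x => by cases x <;> simp⟩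

instance : MeasurableSpace PSym := ⊤

abbrev Config : Type := ℤ → PSym

open PSym

/-- the symbol lies in `{0, ?}` -/
def lowQ (a : PSym) : Prop := a = PSym.zero ∨ a = PSym.quest

instance : DecidablePred lowQ := fun a => by unfold lowQ; infer_instance

/-- the window `(η k, η (k+1))` lies in `{0,?}² \ {(0,0)}` -/
def star2 (η : Config) (k : ℤ) : Prop :=
  lowQ (η k) ∧ lowQ (η (k + 1)) ∧ ¬(η k = PSym.zero ∧ η (k + 1) = PSym.zero)

/-- the window `(η k, η (k+1), η (k+2))` lies in `{0,?}³ \ {(0,0,0)}` -/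
def star3 (η : Config) (k : ℤ) : Prop :=
  lowQ (η k) ∧ lowQ (η (k + 1)) ∧ lowQ (η (k + 2)) ∧
    ¬(η k = PSym.zero ∧ η (k + 1) = PSym.zero ∧ η (k + 2) = PSym.zero)

/-- translation by `k` -/
def shiftBy (k : ℤ) (η : Config) : Config := fun n => η (n + k)

/-- reflection -/
def reflect (η : Config) : Config := fun n => η (-n)

/-- the single-site stochastic update rule of the envelope PCA `F̂_{p,q}`:
`phi p q a b c d` is the probability that the output symbol is `d` when the
neighbourhood reads `(a, b, c)`. -/
noncomputable def phi (p q : ℝ) (a b c d : PSym) : ℝ :=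
  if a = PSym.zero ∧ b = PSym.zero ∧ c = PSym.zero then
    (if d = PSym.zero then p else if d = PSym.one then 1 - p else 0)
  else if lowQ a ∧ lowQ b ∧ lowQ c then
    (if d = PSym.zero then p else if d = PSym.one then q else 1 - p - q)
  else
    (if d = PSym.zero then 1 - q else if d = PSym.one then q else 0)

/-- `ν` is the pushforward of `μ` under the envelope PCA: the `ν`-probability of any
finite cylinder word is obtained by integrating, against `μ`, the product of the
single-site update probabilities (the sites being updated independently). -/
def IsPushforward (p q : ℝ) (μ ν : Measure Config) : Prop :=
  ∀ (x : ℤ) (m : ℕ) (w : Fin m → PSym),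
    (ν {η | ∀ i : Fin m, η (x + ((i : ℕ) : ℤ)) = w i}).toReal =
      ∫ η, (∏ i : Fin m,
        phi p q (η (x + ((i : ℕ) : ℤ))) (η (x + ((i : ℕ) : ℤ) + 1))
          (η (x + ((i : ℕ) : ℤ) + 2)) (w i)) ∂μ


instance : MeasurableSingletonClass PSym := ⟨fun _ => MeasurableSpace.measurableSet_top⟩

lemma phi_nonneg {p q : ℝ} (hp0 : 0 ≤ p) (hp1 : p ≤ 1) (hq0 : 0 ≤ q) (hq1 : q ≤ 1)
    (hpq : p + q ≤ 1) (a b c d : PSym) : 0 ≤ phi p q a b c d := by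
  unfold phi; split_ifs <;> linarith

lemma phi_le_one {p q : ℝ} (hp0 : 0 ≤ p) (hp1 : p ≤ 1) (hq0 : 0 ≤ q) (hq1 : q ≤ 1)
    (hpq : p + q ≤ 1) (a b c d : PSym) : phi p q a b c d ≤ 1 := by
  unfold phi; split_ifs <;> linarith

lemma phi_zero_ge {p q : ℝ} (hpq : p + q ≤ 1) (a b c : PSym) :
    p ≤ phi p q a b c PSym.zero := by
  unfold phi; split_ifs <;> simp_all <;> linarith

lemma phi_quest_eq {p q : ℝ} (a b c : PSym) :
    phi p q a b c PSym.quest =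
      if lowQ a ∧ lowQ b ∧ lowQ c ∧ ¬(a = PSym.zero ∧ b = PSym.zero ∧ c = PSym.zero)
      then 1 - p - q else 0 := by
  unfold phi; split_ifs <;> simp_all [lowQ] <;> tauto

lemma measurable_phi_coords (p q : ℝ) (a b c : ℤ) (d : PSym) :
    Measurable fun η : Config => phi p q (η a) (η b) (η c) d := by
  have h : Measurable fun η : Config => (η a, η b, η c) :=
    (measurable_pi_apply a).prodMk ((measurable_pi_apply b).prodMk (measurable_pi_apply c))
  exact (measurable_of_countable (fun t : PSym × PSym × PSym => phi p q t.1 t.2.1 t.2.2 d)).comp h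

lemma measurable_star3 (k : ℤ) : MeasurableSet {η : Config | star3 η k} := by
  have h : Measurable fun η : Config => (η k, η (k+1), η (k+2)) :=
    (measurable_pi_apply k).prodMk ((measurable_pi_apply (k+1)).prodMk (measurable_pi_apply (k+2)))
  have : {η : Config | star3 η k} = (fun η : Config => (η k, η (k+1), η (k+2))) ⁻¹'
      {t : PSym × PSym × PSym | lowQ t.1 ∧ lowQ t.2.1 ∧ lowQ t.2.2 ∧
        ¬(t.1 = PSym.zero ∧ t.2.1 = PSym.zero ∧ t.2.2 = PSym.zero)} := by
    ext η; simp [star3]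
  rw [this]
  exact h (Set.Countable.measurableSet (Set.to_countable _))

lemma measurable_shiftBy (k : ℤ) : Measurable (shiftBy k) :=
  measurable_pi_lambda _ (fun n => measurable_pi_apply (n + k))

theorem stmt17 (p q : ℝ) (hp0 : 0 < p) (hp1 : p ≤ 1) (hq0 : 0 ≤ q) (hq1 : q ≤ 1)
    (hpq : p + q ≤ 1)
    (μ : Measure Config) [IsProbabilityMeasure μ]
    (hshift : ∀ k : ℤ, Measure.map (shiftBy k) μ = μ)
    (hstat : IsPushforward p q μ μ)
    (h0 : μ {η | η 0 = zero ∧ η 1 = zero ∧ η 2 = zero ∧ η 3 = quest} = 0) :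
    μ {η | star3 η 0} = 0 ∧ μ {η | η 0 = quest} = 0 := by
  classical
  have hr0 : (0:ℝ) ≤ 1 - p - q := by linarith
  have hmap : ∀ (k : ℤ) (s : Set Config), MeasurableSet s → μ ((shiftBy k) ⁻¹' s) = μ s := by
    intro k s hs
    conv_rhs => rw [← hshift k]
    rw [Measure.map_apply (measurable_shiftBy k) hs]
  -- translate star3 window
  have hsh3 : μ {η | star3 η 3} = μ {η | star3 η 0} := by
    have h := hmap 3 {η | star3 η 0} (measurable_star3 0)
    have he : (shiftBy 3) ⁻¹' {η : Config | star3 η 0} = {η | star3 η 3} := by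
      ext η
      simp only [Set.mem_preimage, Set.mem_setOf_eq, star3, shiftBy]
      norm_num
    rwa [he] at h
  -- key integral from the 000? cylinder
  have hkey := hstat 0 4 ![zero, zero, zero, quest]
  have hset : {η : Config | ∀ i : Fin 4, η ((0:ℤ) + ((i:ℕ):ℤ)) = ![zero, zero, zero, quest] i}
      = {η | η 0 = zero ∧ η 1 = zero ∧ η 2 = zero ∧ η 3 = quest} := by
    ext η
    constructor
    · intro h
      refine ⟨?_, ?_, ?_, ?_⟩
      · simpa using h 0
      · simpa using h 1
      · simpa using h 2
      · simpa using h 3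
    · rintro ⟨h1, h2, h3, h4⟩ i
      fin_cases i <;> simp <;> assumption
  rw [hset, h0, ENNReal.toReal_zero] at hkey
  set F : Config → ℝ := fun η =>
    phi p q (η 0) (η 1) (η 2) zero * phi p q (η 1) (η 2) (η 3) zero *
      phi p q (η 2) (η 3) (η 4) zero * phi p q (η 3) (η 4) (η 5) quest with hF
  have hGeq : ∀ η : Config, (∏ i : Fin 4, phi p q (η ((0:ℤ) + ((i:ℕ):ℤ)))
      (η ((0:ℤ) + ((i:ℕ):ℤ) + 1)) (η ((0:ℤ) + ((i:ℕ):ℤ) + 2)) (![zero,zero,zero,quest] i)) = F η := by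
    intro η
    rw [Fin.prod_univ_four]
    simp only [hF, Matrix.cons_val_zero, Matrix.cons_val_one, Matrix.head_cons,
      Matrix.cons_val_two, Matrix.tail_cons, Matrix.cons_val_three,
      show (((0:Fin 4):ℕ):ℤ) = 0 from rfl, show (((1:Fin 4):ℕ):ℤ) = 1 from rfl,
      show (((2:Fin 4):ℕ):ℤ) = 2 from rfl, show (((3:Fin 4):ℕ):ℤ) = 3 from rfl]
    norm_num
  have hkeyF : (0:ℝ) = ∫ η, F η ∂μ := by
    rw [hkey]; exact integral_congr_ae (Filter.Eventually.of_forall hGeq)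
  have hFmeas : Measurable F := by
    exact (((measurable_phi_coords p q 0 1 2 zero).mul
      (measurable_phi_coords p q 1 2 3 zero)).mul
      (measurable_phi_coords p q 2 3 4 zero)).mul (measurable_phi_coords p q 3 4 5 quest)
  have hphin : ∀ (a b c d : PSym), 0 ≤ phi p q a b c d :=
    phi_nonneg hp0.le hp1 hq0 hq1 hpq
  have hphil : ∀ (a b c d : PSym), phi p q a b c d ≤ 1 :=
    phi_le_one hp0.le hp1 hq0 hq1 hpq
  have hFnonneg : ∀ η, 0 ≤ F η := by
    intro η
    exact mul_nonneg (mul_nonneg (mul_nonneg (hphin _ _ _ _) (hphin _ _ _ _)) (hphin _ _ _ _)) (hphin _ _ _ _)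
  have hFle1 : ∀ η, F η ≤ 1 := by
    intro η
    have h1 := hphin (η 0) (η 1) (η 2) zero
    have h2 := hphin (η 1) (η 2) (η 3) zero
    have h3 := hphin (η 2) (η 3) (η 4) zero
    have h4 := hphin (η 3) (η 4) (η 5) quest
    have l1 := hphil (η 0) (η 1) (η 2) zero
    have l2 := hphil (η 1) (η 2) (η 3) zero
    have l3 := hphil (η 2) (η 3) (η 4) zero
    have l4 := hphil (η 3) (η 4) (η 5) quest
    simp only [hF]
    nlinarith [mul_nonneg h1 h2, mul_nonneg (mul_nonneg h1 h2) h3,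
      mul_le_one₀ l1 h2 l2, mul_le_one₀ (mul_le_one₀ l1 h2 l2) h3 l3,
      mul_le_one₀ (mul_le_one₀ (mul_le_one₀ l1 h2 l2) h3 l3) h4 l4]
  have hFint : Integrable F μ := by
    refine Integrable.mono' (integrable_const (1:ℝ)) hFmeas.aestronglyMeasurable ?_
    exact Filter.Eventually.of_forall fun η => by
      rw [Real.norm_eq_abs, abs_of_nonneg (hFnonneg η)]; exact hFle1 η
  -- pointwise lower bound
  have hlow : ∀ η : Config,
      Set.indicator {η : Config | star3 η 3} (fun _ => p^3 * (1 - p - q)) η ≤ F η := by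
    intro η
    by_cases h : η ∈ {η : Config | star3 η 3}
    · rw [Set.indicator_of_mem h]
      have h' : lowQ (η 3) ∧ lowQ (η 4) ∧ lowQ (η 5) ∧
          ¬(η 3 = zero ∧ η 4 = zero ∧ η 5 = zero) := by
        have := h
        simp only [Set.mem_setOf_eq, star3, show (3:ℤ)+1 = 4 by norm_num,
          show (3:ℤ)+2 = 5 by norm_num] at this
        exact this
      have h4 : phi p q (η 3) (η 4) (η 5) quest = 1 - p - q := by
        rw [phi_quest_eq, if_pos h']
      have g1 := phi_zero_ge (p := p) (q := q) hpq (η 0) (η 1) (η 2)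
      have g2 := phi_zero_ge (p := p) (q := q) hpq (η 1) (η 2) (η 3)
      have g3 := phi_zero_ge (p := p) (q := q) hpq (η 2) (η 3) (η 4)
      have hppp : p * p * p ≤ phi p q (η 0) (η 1) (η 2) zero *
          phi p q (η 1) (η 2) (η 3) zero * phi p q (η 2) (η 3) (η 4) zero := by
        apply mul_le_mul (mul_le_mul g1 g2 hp0.le (le_trans hp0.le g1)) g3 hp0.le
        exact mul_nonneg (le_trans hp0.le g1) (le_trans hp0.le g2)
      calc p^3 * (1 - p - q) = p * p * p * (1 - p - q) := by ring
        _ ≤ phi p q (η 0) (η 1) (η 2) zero * phi p q (η 1) (η 2) (η 3) zero *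
            phi p q (η 2) (η 3) (η 4) zero * (1 - p - q) :=
          mul_le_mul_of_nonneg_right hppp hr0
        _ = F η := by simp only [hF]; rw [h4]
    · rw [Set.indicator_of_notMem h]; exact hFnonneg η
  have hmono := integral_mono_of_nonneg
    (Filter.Eventually.of_forall fun η => Set.indicator_nonneg (fun _ _ => by positivity) η)
    hFint (Filter.Eventually.of_forall hlow)
  rw [integral_indicator_const _ (measurable_star3 3), ← hkeyF, smul_eq_mul, measureReal_def] at hmono
  -- quest cylinder
  have hquest := hstat 0 1 (fun _ => quest)
  have hset1 : {η : Config | ∀ i : Fin 1, η ((0:ℤ) + ((i:ℕ):ℤ)) = quest} = {η | η 0 = quest} := by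
    ext η
    constructor
    · intro h; simpa using h 0
    · intro h i; fin_cases i; simpa using h
  rw [hset1] at hquest
  have hqint : (μ {η : Config | η 0 = quest}).toReal
      = (μ {η : Config | star3 η 0}).toReal * (1 - p - q) := by
    rw [hquest]
    have : ∀ η : Config, (∏ i : Fin 1, phi p q (η ((0:ℤ) + ((i:ℕ):ℤ)))
        (η ((0:ℤ) + ((i:ℕ):ℤ) + 1)) (η ((0:ℤ) + ((i:ℕ):ℤ) + 2)) quest)
        = Set.indicator {η : Config | star3 η 0} (fun _ => 1 - p - q) η := by
      intro η
      rw [Fin.prod_univ_one]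
      norm_num
      rw [phi_quest_eq, Set.indicator_apply]
      have hiff : η ∈ {η : Config | star3 η 0} ↔
          (lowQ (η 0) ∧ lowQ (η 1) ∧ lowQ (η 2) ∧
            ¬(η 0 = zero ∧ η 1 = zero ∧ η 2 = zero)) := by
        simp only [Set.mem_setOf_eq, star3, show (0:ℤ)+1 = 1 by norm_num,
          show (0:ℤ)+2 = 2 by norm_num]
      by_cases h : η ∈ {η : Config | star3 η 0}
      · rw [if_pos (hiff.mp h), if_pos h]
      · rw [if_neg (fun hc => h (hiff.mpr hc)), if_neg h]
    rw [integral_congr_ae (Filter.Eventually.of_forall this),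
      integral_indicator_const _ (measurable_star3 0), smul_eq_mul, measureReal_def]
  have hmeasq : MeasurableSet {η : Config | η 0 = quest} := by
    have : {η : Config | η 0 = quest} = (fun η : Config => η 0) ⁻¹' {quest} := rfl
    rw [this]; exact measurable_pi_apply 0 (MeasurableSet.singleton quest)
  rcases lt_or_eq_of_le hr0 with hr | hr
  · -- r > 0 : star3 measure is zero from hmono
    have hc : 0 < p^3 * (1 - p - q) := by positivity
    have ht : (μ {η : Config | star3 η 3}).toReal = 0 := by
      by_contra hne
      have hpos : 0 < (μ {η : Config | star3 η 3}).toReal :=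
        lt_of_le_of_ne ENNReal.toReal_nonneg (Ne.symm hne)
      nlinarith
    have h3 : μ {η : Config | star3 η 3} = 0 := by
      have := (ENNReal.toReal_eq_zero_iff _).mp ht
      rcases this with h | h
      · exact h
      · exact absurd h (measure_ne_top μ _)
    have hstar0 : μ {η : Config | star3 η 0} = 0 := by rw [← hsh3]; exact h3
    refine ⟨hstar0, ?_⟩
    have : (μ {η : Config | η 0 = quest}).toReal = 0 := by
      rw [hqint, hstar0]; simp
    rcases (ENNReal.toReal_eq_zero_iff _).mp this with h | h
    · exact h
    · exact absurd h (measure_ne_top μ _)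
  · -- r = 0 : quest measure zero directly, then star3 via union bound
    have hqz : μ {η : Config | η 0 = quest} = 0 := by
      have : (μ {η : Config | η 0 = quest}).toReal = 0 := by
        rw [hqint, ← hr]; ring
      rcases (ENNReal.toReal_eq_zero_iff _).mp this with h | h
      · exact h
      · exact absurd h (measure_ne_top μ _)
    have hq1' : μ {η : Config | η 1 = quest} = 0 := by
      have he : (shiftBy 1) ⁻¹' {η : Config | η 0 = quest} = {η | η 1 = quest} := by
        ext η; simp [shiftBy]
      rw [← he, hmap 1 _ hmeasq]
      exact hqz
    have hq2' : μ {η : Config | η 2 = quest} = 0 := by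
      have := hmap 2 {η : Config | η 0 = quest} hmeasq
      have he : (shiftBy 2) ⁻¹' {η : Config | η 0 = quest} = {η | η 2 = quest} := by
        ext η; simp [shiftBy]
      rw [he] at this
      rw [this]; exact hqz
    have hsub : {η : Config | star3 η 0} ⊆
        {η : Config | η 0 = quest} ∪ {η | η 1 = quest} ∪ {η | η 2 = quest} := by
      intro η h
      have h' : lowQ (η 0) ∧ lowQ (η 1) ∧ lowQ (η 2) ∧
          ¬(η 0 = zero ∧ η 1 = zero ∧ η 2 = zero) := by
        simpa only [Set.mem_setOf_eq, star3, show (0:ℤ)+1 = 1 by norm_num,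
          show (0:ℤ)+2 = 2 by norm_num] using h
      obtain ⟨ha, hb, hc, hd⟩ := h'
      simp only [Set.mem_union, Set.mem_setOf_eq]
      rcases ha with ha | ha
      · rcases hb with hb | hb
        · rcases hc with hc | hc
          · exact absurd ⟨ha, hb, hc⟩ hd
          · right; exact hc
        · left; right; exact hb
      · left; left; exact ha
    have hstar0 : μ {η : Config | star3 η 0} = 0 := by
      have h1 : μ {η : Config | star3 η 0} ≤ μ ({η : Config | η 0 = quest} ∪ {η | η 1 = quest} ∪ {η | η 2 = quest}) := measure_mono hsub
      have h2 : μ ({η : Config | η 0 = quest} ∪ {η | η 1 = quest} ∪ {η | η 2 = quest}) = 0 := by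
        exact measure_union_null (measure_union_null hqz hq1') hq2'
      exact le_antisymm (h2 ▸ h1) zero_le
    exact ⟨hstar0, hqz⟩
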